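/- If W satisfies the minimal constraints and W·ln W, W², and W³ are integrable, then S[W] ≥ ln π + t + t²/2 + Var(X)/2, where t := 1 − μ/2, μ is the purity of W, and Var(X) := ∫ W(q,p) · (π·W(q,p) − μ/2)² dq dp. -/

import Mathlib

open Real MeasureTheory

lemma quad_hasDeriv {y : ℝ} (hy : y ≠ 0) :
    HasDerivAt (fun y : ℝ => Real.log y - y + 1 + (1 - y) ^ 2 / 2)
      ((1 - y) ^ 2 / y) y := by
  have h1 : HasDerivAt (fun y : ℝ => Real.log y) y⁻¹ y := Real.hasDerivAt_log hy
  have h2 : HasDerivAt (fun y : ℝ => (1 - y) ^ 2 / 2) (-(1 - y)) y := by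
    have hs : HasDerivAt (fun y : ℝ => (1 - y)) (-1) y := (hasDerivAt_id y).const_sub 1
    have := (hs.pow 2).div_const 2
    refine this.congr_deriv ?_
    ring
  have hf := ((h1.sub (hasDerivAt_id y)).add_const 1).add h2
  refine hf.congr_deriv ?_
  field_simp
  ring

lemma log_le_quad {x : ℝ} (hx : 0 < x) (hx1 : x ≤ 1) :
    Real.log x ≤ x - 1 - (1 - x) ^ 2 / 2 := by
  have key : MonotoneOn (fun y : ℝ => Real.log y - y + 1 + (1 - y) ^ 2 / 2)
      (Set.Ioc 0 1) := by
    apply monotoneOn_of_deriv_nonneg (convex_Ioc 0 1)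
    · apply ContinuousOn.add
      · apply ContinuousOn.add
        · exact (Real.continuousOn_log.mono (by
            intro y hy
            simp only [Set.mem_compl_iff, Set.mem_singleton_iff]
            exact ne_of_gt hy.1)).sub continuousOn_id
        · exact continuousOn_const
      · exact ((continuousOn_const.sub continuousOn_id).pow 2).div_const 2
    · rw [interior_Ioc]
      intro y hy
      exact ((quad_hasDeriv (ne_of_gt hy.1)).differentiableAt.differentiableWithinAt)
    · rw [interior_Ioc]
      intro y hy
      rw [(quad_hasDeriv (ne_of_gt hy.1)).deriv]
      have hy0 : (0:ℝ) < y := hy.1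
      positivity
  have hmem : x ∈ Set.Ioc (0:ℝ) 1 := ⟨hx, hx1⟩
  have hmem1 : (1:ℝ) ∈ Set.Ioc (0:ℝ) 1 := by norm_num
  have := key hmem hmem1 hx1
  simp only [Real.log_one] at this
  nlinarith [this]

lemma int_poly (W : ℝ × ℝ → ℝ) (hW : Integrable W)
    (hsq : Integrable (fun z => (W z) ^ 2)) (hcube : Integrable (fun z => (W z) ^ 3))
    (a b c : ℝ) :
    ∫ z, (a * W z + b * (W z) ^ 2 + c * (W z) ^ 3)
      = a * (∫ z, W z) + b * (∫ z, (W z) ^ 2) + c * (∫ z, (W z) ^ 3) := by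
  have h1 : Integrable (fun z => a * W z) := hW.const_mul a
  have h2 : Integrable (fun z => b * (W z) ^ 2) := hsq.const_mul b
  have h3 : Integrable (fun z => c * (W z) ^ 3) := hcube.const_mul c
  have h12 : Integrable (fun z => a * W z + b * (W z) ^ 2) := h1.add h2
  rw [integral_add h12 h3, integral_add h1 h2,
    integral_const_mul, integral_const_mul, integral_const_mul]

/-- Variance-refined `n = 2` bound: if `W` satisfies the minimal constraints and `W·ln W`,
`W²`, `W³` are integrable, then `S[W] ≥ ln π + t + t²/2 + Var(X)/2`, where `t = 1 − μ/2`,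
`μ = 2π ∫ W²` is the purity, and `Var(X) = ∫ W (π W − μ/2)²`. -/
theorem variance_refined_B2 (W : ℝ × ℝ → ℝ) (hmeas : Measurable W)
    (hpos : ∀ z, 0 ≤ W z)
    (hnorm : ∫ z, W z = 1)
    (hbound : ∀ z, Real.pi * W z ≤ 1)
    (hlog : Integrable (fun z => W z * Real.log (W z)))
    (hsq : Integrable (fun z => (W z) ^ 2))
    (hcube : Integrable (fun z => (W z) ^ 3)) :
    (-∫ z, W z * Real.log (W z))
      ≥ Real.log Real.pi
        + (1 - (2 * Real.pi * ∫ z, (W z) ^ 2) / 2)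
        + (1 - (2 * Real.pi * ∫ z, (W z) ^ 2) / 2) ^ 2 / 2
        + (∫ z, W z * (Real.pi * W z - (2 * Real.pi * ∫ w, (W w) ^ 2) / 2) ^ 2) / 2 := by
  have hW : Integrable W := by
    by_contra h
    rw [integral_undef h] at hnorm
    norm_num at hnorm
  -- pointwise key inequality
  have key : ∀ z, (Real.log Real.pi + 3/2) * W z + (-(2 * Real.pi)) * (W z) ^ 2
      + (Real.pi ^ 2 / 2) * (W z) ^ 3 ≤ -(W z * Real.log (W z)) := by
    intro z
    rcases eq_or_lt_of_le (hpos z) with h0 | h0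
    · rw [← h0]
      simp
    · have hx : 0 < Real.pi * W z := mul_pos Real.pi_pos h0
      have hq := log_le_quad hx (hbound z)
      rw [Real.log_mul Real.pi_ne_zero (ne_of_gt h0)] at hq
      nlinarith [mul_le_mul_of_nonneg_left hq (le_of_lt h0)]
  have hpoly : Integrable (fun z => (Real.log Real.pi + 3/2) * W z
      + (-(2 * Real.pi)) * (W z) ^ 2 + (Real.pi ^ 2 / 2) * (W z) ^ 3) :=
    ((hW.const_mul _).add (hsq.const_mul _)).add (hcube.const_mul _)
  have hineq : (Real.log Real.pi + 3/2) * (∫ z, W z)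
      + (-(2 * Real.pi)) * (∫ z, (W z) ^ 2)
      + (Real.pi ^ 2 / 2) * (∫ z, (W z) ^ 3) ≤ -∫ z, W z * Real.log (W z) := by
    rw [← int_poly W hW hsq hcube, ← integral_neg]
    exact integral_mono hpoly hlog.neg key
  -- compute the variance integral
  have hB : (∫ z, W z * (Real.pi * W z - (2 * Real.pi * ∫ w, (W w) ^ 2) / 2) ^ 2)
      = ((2 * Real.pi * ∫ z, (W z) ^ 2) / 2) ^ 2 * (∫ z, W z)
        + (-(2 * Real.pi * ((2 * Real.pi * ∫ z, (W z) ^ 2) / 2))) * (∫ z, (W z) ^ 2)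
        + Real.pi ^ 2 * (∫ z, (W z) ^ 3) := by
    rw [← int_poly W hW hsq hcube]
    congr 1
    funext z
    ring
  rw [hB, hnorm] at *
  rw [ge_iff_le]
  have hring : Real.log Real.pi
        + (1 - (2 * Real.pi * ∫ z, (W z) ^ 2) / 2)
        + (1 - (2 * Real.pi * ∫ z, (W z) ^ 2) / 2) ^ 2 / 2
        + (((2 * Real.pi * ∫ z, (W z) ^ 2) / 2) ^ 2 * 1
          + (-(2 * Real.pi * ((2 * Real.pi * ∫ z, (W z) ^ 2) / 2))) * (∫ z, (W z) ^ 2)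
          + Real.pi ^ 2 * (∫ z, (W z) ^ 3)) / 2
      = (Real.log Real.pi + 3/2) * 1 + (-(2 * Real.pi)) * (∫ z, (W z) ^ 2)
        + (Real.pi ^ 2 / 2) * (∫ z, (W z) ^ 3) := by
    ring
  rw [hring]
  exact hineq
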